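/- Suppose the differences {X_i − X_j : 1 ≤ i, j ≤ m} span ℝ^d and let β be an interior point of Δ_X. Then, under the constraints Σ p_j = 1 and Σ p_j X_j = β, the entropy h(p) attains its maximum at a point p* with all coordinates strictly positive, and this maximal point is unique. -/
import Mathlib


open scoped BigOperators RealInnerProductSpace
open Filter Topology

noncomputable section

/-- `Euc s` is the Euclidean space `ℝ^s`. -/
abbrev Euc (s : ℕ) := EuclideanSpace ℝ (Fin s)

/-- The additive semigroup `X₁ℕ + ⋯ + X_mℕ` generated by the vectors `X j`. -/
def sgOf {s : ℕ} {ι : Type*} [Fintype ι] (X : ι → Euc s) : Set (Euc s) :=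
  {z | ∃ u : ι → ℕ, ∑ j, (u j : ℝ) • X j = z}

/-- The lattice `X₁ℤ + ⋯ + X_mℤ` generated by the vectors `X j`. -/
def latOf {s : ℕ} {ι : Type*} [Fintype ι] (X : ι → Euc s) : Set (Euc s) :=
  {z | ∃ u : ι → ℤ, ∑ j, (u j : ℝ) • X j = z}

/-- The convex cone `X₁ℝ⁺ + ⋯ + X_mℝ⁺` generated by the vectors `X j`. -/
def coneOf {s : ℕ} {ι : Type*} [Fintype ι] (X : ι → Euc s) : Set (Euc s) :=
  {x | ∃ c : ι → ℝ, (∀ j, 0 ≤ c j) ∧ ∑ j, c j • X j = x}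

/-- The multiplicity of `z`: the number of finite words `i₁…i_n` with
`X_{i₁} + ⋯ + X_{i_n} = z`. -/
def mult {s : ℕ} {ι : Type*} [Fintype ι] (X : ι → Euc s) (z : Euc s) : ℕ :=
  Set.ncard {w : List ι | (w.map X).sum = z}

/-- The multiplicity extended to the cone: the minimum of `mult X z` over points
`z` of the semigroup nearest to `x`. -/
def multC {s : ℕ} {ι : Type*} [Fintype ι] (X : ι → Euc s) (x : Euc s) : ℕ :=
  sInf {n | ∃ z ∈ sgOf X, dist x z = Metric.infDist x (sgOf X) ∧ mult X z = n}

/-- All the vectors `X j` have integer coordinates. -/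
def IntegralVecs {s : ℕ} {ι : Type*} (X : ι → Euc s) : Prop :=
  ∀ j i, ∃ n : ℤ, X j i = (n : ℝ)

/-- The entropy `h(p) = -∑ p_j log p_j` of a probability vector. -/
def entropy {m : ℕ} (p : Fin m → ℝ) : ℝ := -∑ j, p j * Real.log (p j)

/-- The `p`-th iteration of `X`: all sums `X_{ω₁} + ⋯ + X_{ω_p}` over words `ω`. -/
def iter {s m : ℕ} (X : Fin m → Euc s) (p : ℕ) : (Fin p → Fin m) → Euc s :=
  fun ω => ∑ i, X (ω i)

lemma aux_negMulLog_le_one {x : ℝ} (h0 : 0 ≤ x) : Real.negMulLog x ≤ 1 := by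
  rcases eq_or_lt_of_le h0 with h | h
  · simp [← h]
  · have h1 : Real.log x⁻¹ ≤ x⁻¹ - 1 := Real.log_le_sub_one_of_pos (by positivity)
    rw [Real.log_inv] at h1
    calc Real.negMulLog x = x * (-Real.log x) := by rw [Real.negMulLog]; ring
    _ ≤ x * (x⁻¹ - 1) := by nlinarith
    _ = 1 - x := by field_simp
    _ ≤ 1 := by linarith

lemma aux_entropy_eq {m : ℕ} (p : Fin m → ℝ) :
    entropy p = ∑ j, Real.negMulLog (p j) := by
  rw [entropy, ← Finset.sum_neg_distrib]
  simp [Real.negMulLog_eq_neg]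

lemma aux_entropy_improve {m : ℕ} (p q : Fin m → ℝ)
    (hp0 : ∀ j, 0 ≤ p j)
    (hq0 : ∀ j, 0 < q j) (hq1 : ∀ j, q j ≤ 1)
    (j0 : Fin m) (hj0 : p j0 = 0) :
    ∃ t : ℝ, 0 < t ∧ t < 1 ∧
      entropy p < entropy (fun j => (1 - t) * p j + t * q j) := by
  set t : ℝ := min (1/2) (Real.exp (-(((m:ℝ)+1) / q j0))) with ht_def
  have ht0 : 0 < t := lt_min (by norm_num) (Real.exp_pos _)
  have ht_half : t ≤ 1/2 := min_le_left _ _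
  have htlog : Real.log t ≤ -(((m:ℝ)+1)/ q j0) := by
    calc Real.log t ≤ Real.log (Real.exp (-(((m:ℝ)+1) / q j0))) :=
          Real.log_le_log ht0 (min_le_right _ _)
    _ = _ := Real.log_exp _
  have key : ∀ j, Real.negMulLog (p j) - t + (if j = j0 then ((m:ℝ)+1)*t else 0)
      ≤ Real.negMulLog ((1 - t) * p j + t * q j) := by
    intro j
    by_cases hj : j = j0
    · subst hj
      simp only [hj0, mul_zero, zero_add, if_pos rfl, Real.negMulLog_zero,
        eq_self_iff_true, if_true]
      have hlogq : Real.log (q j) ≤ 0 := Real.log_nonpos (hq0 j).le (hq1 j)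
      have heq : Real.negMulLog (t * q j)
          = t * q j * (-Real.log t) + t * q j * (-Real.log (q j)) := by
        rw [Real.negMulLog, Real.log_mul (ne_of_gt ht0) (ne_of_gt (hq0 j))]; ring
      have h2 : ((m:ℝ)+1) ≤ q j * (-Real.log t) := by
        have hge : ((m:ℝ)+1)/ q j ≤ -Real.log t := by linarith
        rw [mul_comm]
        rwa [div_le_iff₀ (hq0 j)] at hge
      have h3 : t*(((m:ℝ)+1)) ≤ t * (q j * (-Real.log t)) :=
        mul_le_mul_of_nonneg_left h2 ht0.le
      have h5 : 0 ≤ t * q j * (-Real.log (q j)) :=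
        mul_nonneg (mul_nonneg ht0.le (hq0 j).le) (neg_nonneg.mpr hlogq)
      nlinarith
    · simp only [if_neg hj, add_zero]
      have hcc := Real.concaveOn_negMulLog.2 (Set.mem_Ici.mpr (hp0 j))
        (Set.mem_Ici.mpr (hq0 j).le) (by linarith : (0:ℝ) ≤ 1 - t) ht0.le (by ring)
      simp only [smul_eq_mul] at hcc
      have h5 : 0 ≤ Real.negMulLog (q j) := Real.negMulLog_nonneg (hq0 j).le (hq1 j)
      have h6 : Real.negMulLog (p j) ≤ 1 := aux_negMulLog_le_one (hp0 j)
      nlinarith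
  refine ⟨t, ht0, by linarith, ?_⟩
  rw [aux_entropy_eq, aux_entropy_eq]
  have hsum := Finset.sum_le_sum (fun j (_ : j ∈ Finset.univ) => key j)
  have hcomp : ∑ j, (Real.negMulLog (p j) - t + (if j = j0 then ((m:ℝ)+1)*t else 0))
      = ∑ j, Real.negMulLog (p j) + t := by
    rw [Finset.sum_add_distrib, Finset.sum_sub_distrib]
    simp only [Finset.sum_ite_eq', Finset.mem_univ, if_pos, Finset.sum_const,
      Finset.card_univ, Fintype.card_fin, nsmul_eq_mul]
    ring
  rw [hcomp] at hsum
  linarith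

lemma aux_mem_hull_exists {d m : ℕ} (X : Fin m → Euc d) {x : Euc d}
    (hx : x ∈ convexHull ℝ (Set.range X)) :
    ∃ w : Fin m → ℝ, (∀ j, 0 ≤ w j) ∧ ∑ j, w j = 1 ∧ ∑ j, w j • X j = x := by
  rw [convexHull_range_eq_exists_affineCombination] at hx
  obtain ⟨s, w, hw0, hw1, hwx⟩ := hx
  refine ⟨fun j => if j ∈ s then w j else 0, fun j => ?_, ?_, ?_⟩
  · simp only
    split_ifs with h
    exacts [hw0 _ h, le_rfl]
  · rw [Finset.sum_ite_mem, Finset.univ_inter]; exact hw1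
  · have : ∀ j, (if j ∈ s then w j else 0) • X j = if j ∈ s then w j • X j else 0 := by
      intro j; split_ifs <;> simp
    rw [Finset.sum_congr rfl fun j _ => this j, Finset.sum_ite_mem, Finset.univ_inter,
      ← Finset.affineCombination_eq_linear_combination s X w hw1]
    exact hwx

theorem stmt10 {d m : ℕ} (hm : 2 ≤ m) (X : Fin m → Euc d)
    (hspan : Submodule.span ℝ {v : Euc d | ∃ i j, v = X i - X j} = ⊤)
    (β : Euc d) (hβ : β ∈ interior (convexHull ℝ (Set.range X))) :
    ∃ pstar : Fin m → ℝ,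
      (∀ j, 0 < pstar j) ∧ ∑ j, pstar j = 1 ∧ ∑ j, pstar j • X j = β ∧
      (∀ p : Fin m → ℝ, (∀ j, 0 ≤ p j) → ∑ j, p j = 1 → ∑ j, p j • X j = β →
        entropy p ≤ entropy pstar) ∧
      (∀ p : Fin m → ℝ, (∀ j, 0 ≤ p j) → ∑ j, p j = 1 → ∑ j, p j • X j = β →
        entropy p = entropy pstar → p = pstar) := by
  have hm0 : (0:ℝ) < m := by positivity
  -- the feasible set
  set S : Set (Fin m → ℝ) :=
    {p | (∀ j, 0 ≤ p j) ∧ (∑ j, p j = 1 ∧ ∑ j, p j • X j = β)} with hS_def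
  -- S is closed
  have hclosed : IsClosed S := by
    have h1 : IsClosed {p : Fin m → ℝ | ∀ j, 0 ≤ p j} := by
      rw [Set.setOf_forall]
      exact isClosed_iInter fun j => isClosed_le continuous_const (continuous_apply j)
    have h2 : IsClosed {p : Fin m → ℝ | ∑ j, p j = 1} :=
      isClosed_eq (continuous_finset_sum _ fun j _ => continuous_apply j) continuous_const
    have h3 : IsClosed {p : Fin m → ℝ | ∑ j, p j • X j = β} :=
      isClosed_eq (continuous_finset_sum _ fun j _ =>
        (continuous_apply j).smul continuous_const) continuous_const
    have : S = {p : Fin m → ℝ | ∀ j, 0 ≤ p j} ∩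
        ({p : Fin m → ℝ | ∑ j, p j = 1} ∩ {p : Fin m → ℝ | ∑ j, p j • X j = β}) := by
      ext p; simp [hS_def, Set.mem_inter_iff, and_assoc]
    rw [this]
    exact h1.inter (h2.inter h3)
  -- S is contained in a compact box
  have hsub : S ⊆ Set.pi Set.univ (fun _ : Fin m => Set.Icc (0:ℝ) 1) := by
    rintro p ⟨hp0, hp1, -⟩ j _
    exact ⟨hp0 j, hp1 ▸ Finset.single_le_sum (fun i _ => hp0 i) (Finset.mem_univ j)⟩
  have hScompact : IsCompact S :=
    IsCompact.of_isClosed_subset (isCompact_univ_pi fun _ => isCompact_Icc) hclosed hsub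
  -- S is nonempty
  obtain ⟨w₀, hw₀0, hw₀1, hw₀X⟩ := aux_mem_hull_exists X (interior_subset hβ)
  have hSne : S.Nonempty := ⟨w₀, hw₀0, hw₀1, hw₀X⟩
  -- entropy is continuous
  have hent : Continuous (entropy (m := m)) := by
    have : (entropy (m := m)) = fun p => ∑ j, Real.negMulLog (p j) := by
      funext p; exact aux_entropy_eq p
    rw [this]
    exact continuous_finset_sum _ fun j _ => Real.continuous_negMulLog.comp (continuous_apply j)
  -- maximizer
  obtain ⟨pstar, hpS, hmax⟩ := hScompact.exists_isMaxOn hSne hent.continuousOn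
  obtain ⟨hps0, hps1, hpsX⟩ := hpS
  -- a strictly positive feasible point q
  have hq : ∃ q : Fin m → ℝ, (∀ j, 0 < q j) ∧ ∑ j, q j = 1 ∧ ∑ j, q j • X j = β := by
    obtain ⟨ε, hε, hball⟩ := Metric.mem_nhds_iff.mp (mem_interior_iff_mem_nhds.mp hβ)
    set c : Euc d := ∑ j, ((m:ℝ)⁻¹) • X j with hc_def
    set t : ℝ := ε / (2 * (‖β - c‖ + 1)) with ht_def
    have ht0 : 0 < t := by positivity
    set β' : Euc d := β + t • (β - c) with hβ'_def
    have hβ'mem : β' ∈ convexHull ℝ (Set.range X) := by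
      apply hball
      rw [Metric.mem_ball, dist_eq_norm]
      have : β' - β = t • (β - c) := by rw [hβ'_def]; abel
      rw [this, norm_smul, Real.norm_eq_abs, abs_of_pos ht0, ht_def]
      rw [div_mul_eq_mul_div, div_lt_iff₀ (by positivity)]
      nlinarith [norm_nonneg (β - c), hε]
    obtain ⟨w, hw0, hw1, hwX⟩ := aux_mem_hull_exists X hβ'mem
    refine ⟨fun j => (1+t)⁻¹ * (w j + t * (m:ℝ)⁻¹), fun j => ?_, ?_, ?_⟩
    · have := hw0 j
      positivity
    · rw [← Finset.mul_sum, Finset.sum_add_distrib, hw1, Finset.sum_const,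
        Finset.card_univ, Fintype.card_fin, nsmul_eq_mul]
      field_simp
    · have hterm : ∀ j, ((1+t)⁻¹ * (w j + t * (m:ℝ)⁻¹)) • X j
          = (1+t)⁻¹ • (w j • X j) + (1+t)⁻¹ • (t • (((m:ℝ)⁻¹) • X j)) := by
        intro j
        rw [mul_smul, add_smul, mul_smul, smul_add]
      rw [Finset.sum_congr rfl fun j _ => hterm j, Finset.sum_add_distrib,
        ← Finset.smul_sum, ← Finset.smul_sum, ← Finset.smul_sum, hwX, ← smul_add]
      have hcomb : β' + t • c = (1+t) • β := by
        rw [hβ'_def]; module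
      rw [← hc_def, hcomb, smul_smul, inv_mul_cancel₀ (by positivity), one_smul]
  obtain ⟨q, hq0, hq1, hqX⟩ := hq
  have hq1' : ∀ j, q j ≤ 1 := fun j =>
    hq1 ▸ Finset.single_le_sum (fun i _ => (hq0 i).le) (Finset.mem_univ j)
  -- pstar is strictly positive
  have hpos : ∀ j, 0 < pstar j := by
    by_contra h
    push_neg at h
    obtain ⟨j0, hj0⟩ := h
    have hj0' : pstar j0 = 0 := le_antisymm hj0 (hps0 j0)
    obtain ⟨t, ht0, ht1, hlt⟩ := aux_entropy_improve pstar q hps0 hq0 hq1' j0 hj0'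
    set r : Fin m → ℝ := fun j => (1 - t) * pstar j + t * q j with hr_def
    have hrS : r ∈ S := by
      refine ⟨fun j => add_nonneg (mul_nonneg (by linarith) (hps0 j))
        (mul_nonneg ht0.le (hq0 j).le), ?_, ?_⟩
      · rw [Finset.sum_add_distrib, ← Finset.mul_sum, ← Finset.mul_sum, hps1, hq1]; ring
      · have hterm : ∀ j, r j • X j = (1 - t) • (pstar j • X j) + t • (q j • X j) := by
          intro j; rw [hr_def]; simp only
          rw [add_smul, mul_smul, mul_smul]
        rw [Finset.sum_congr rfl fun j _ => hterm j, Finset.sum_add_distrib,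
          ← Finset.smul_sum, ← Finset.smul_sum, hpsX, hqX, ← add_smul]
        norm_num
    exact absurd (hmax hrS) (not_le.mpr hlt)
  refine ⟨pstar, hpos, hps1, hpsX, fun p hp0 hp1 hpX => hmax ⟨hp0, hp1, hpX⟩, ?_⟩
  -- uniqueness
  intro p hp0 hp1 hpX hpe
  by_contra hne
  obtain ⟨j1, hj1⟩ : ∃ j, p j ≠ pstar j := by
    by_contra h; push_neg at h; exact hne (funext h)
  set r : Fin m → ℝ := fun j => (1/2) * p j + (1/2) * pstar j with hr_def
  have hrS : r ∈ S := by
    refine ⟨fun j => add_nonneg (mul_nonneg (by norm_num) (hp0 j))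
      (mul_nonneg (by norm_num) (hps0 j)), ?_, ?_⟩
    · rw [Finset.sum_add_distrib, ← Finset.mul_sum, ← Finset.mul_sum, hp1, hps1]; ring
    · have hterm : ∀ j, r j • X j = (1/2 : ℝ) • (p j • X j) + (1/2 : ℝ) • (pstar j • X j) := by
        intro j; rw [hr_def]; simp only
        rw [add_smul, mul_smul, mul_smul]
      rw [Finset.sum_congr rfl fun j _ => hterm j, Finset.sum_add_distrib,
        ← Finset.smul_sum, ← Finset.smul_sum, hpX, hpsX, ← add_smul]
      norm_num
  have hstrict : entropy pstar < entropy r := by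
    rw [aux_entropy_eq r]
    have hle : ∀ j ∈ Finset.univ,
        (1/2 : ℝ) * Real.negMulLog (p j) + (1/2 : ℝ) * Real.negMulLog (pstar j)
          ≤ Real.negMulLog (r j) := by
      intro j _
      have := Real.concaveOn_negMulLog.2 (Set.mem_Ici.mpr (hp0 j))
        (Set.mem_Ici.mpr (hps0 j)) (by norm_num : (0:ℝ) ≤ 1/2) (by norm_num : (0:ℝ) ≤ 1/2)
        (by norm_num)
      simpa only [smul_eq_mul] using this
    have hlt1 : (1/2 : ℝ) * Real.negMulLog (p j1) + (1/2 : ℝ) * Real.negMulLog (pstar j1)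
        < Real.negMulLog (r j1) := by
      have := Real.strictConcaveOn_negMulLog.2 (Set.mem_Ici.mpr (hp0 j1))
        (Set.mem_Ici.mpr (hps0 j1)) hj1 (by norm_num : (0:ℝ) < 1/2)
        (by norm_num : (0:ℝ) < 1/2) (by norm_num)
      simpa only [smul_eq_mul] using this
    have hsum : ∑ j, ((1/2 : ℝ) * Real.negMulLog (p j) + (1/2 : ℝ) * Real.negMulLog (pstar j))
        < ∑ j, Real.negMulLog (r j) :=
      Finset.sum_lt_sum hle ⟨j1, Finset.mem_univ j1, hlt1⟩
    have hLHS : ∑ j, ((1/2 : ℝ) * Real.negMulLog (p j) + (1/2 : ℝ) * Real.negMulLog (pstar j))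
        = (1/2 : ℝ) * entropy p + (1/2 : ℝ) * entropy pstar := by
      rw [Finset.sum_add_distrib, ← Finset.mul_sum, ← Finset.mul_sum,
        ← aux_entropy_eq, ← aux_entropy_eq]
    rw [hLHS, hpe] at hsum
    linarith
  exact absurd (hmax hrS) (not_le.mpr hstrict)
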